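/- Let G, H be finite groups with canonical inclusions ι_G : G → G×H and ι_H : H → G×H, and let X be a finite G-set and Y a finite H-set. Then the category of finite (G×H)-sets over the (G×H)-set (Ind_{ι_G} X) ⊔ (Ind_{ι_H} Y) is equivalent to the product category (G-Set/X) × (H-Set/Y). -/

import Mathlib

open CategoryTheory

/-- Relation defining the induced `K`-set `Ind_ι X = K ×_G X` along `ι : G →* K`. -/
def indRel8 {K G : Type} [Group K] [Group G] (ι : G →* K) (X : Type) [MulAction G X] :
    K × X → K × X → Prop :=
  fun p q => ∃ g : G, p.1 = q.1 * ι g ∧ q.2 = g • p.2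

/-- The `K`-action `k • [ξ, x] = [k ξ, x]` on the induced set. -/
instance indAction8 {K G : Type} [Group K] [Group G] (ι : G →* K) (X : Type) [MulAction G X] :
    MulAction K (Quot (indRel8 ι X)) where
  smul k := Quot.lift (fun p => Quot.mk (indRel8 ι X) (k * p.1, p.2)) (by
    rintro p q ⟨g, h1, h2⟩
    exact Quot.sound ⟨g, by rw [h1, mul_assoc], h2⟩)
  one_smul := by
    intro q
    obtain ⟨p, rfl⟩ := Quot.exists_rep q
    show Quot.mk _ (1 * p.1, p.2) = Quot.mk _ p
    rw [one_mul]
  mul_smul := by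
    intro k k' q
    obtain ⟨p, rfl⟩ := Quot.exists_rep q
    show Quot.mk _ (k * k' * p.1, p.2) = Quot.mk _ (k * (k' * p.1), p.2)
    rw [mul_assoc]

/-- Componentwise action on a disjoint union (bicoproduct) of `K`-sets. -/
instance sumAction8 {K A B : Type} [Monoid K] [MulAction K A] [MulAction K B] :
    MulAction K (A ⊕ B) where
  smul k := Sum.map (fun a => k • a) (fun b => k • b)
  one_smul := by
    rintro (a | b)
    · show Sum.inl ((1 : K) • a) = Sum.inl a
      rw [one_smul]
    · show Sum.inr ((1 : K) • b) = Sum.inr b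
      rw [one_smul]
  mul_smul := by
    rintro k k' (a | b)
    · show Sum.inl ((k * k') • a) = Sum.inl (k • k' • a)
      rw [mul_smul]
    · show Sum.inr ((k * k') • b) = Sum.inr (k • k' • b)
      rw [mul_smul]

/-- The category of finite `K`-sets over a fixed `K`-set `Z`: objects are
finite `K`-sets equipped with an equivariant structure map to `Z`. -/
structure FinGSetOver (K : Type) [Group K] (Z : Type) [MulAction K Z] : Type 1 where
  carrier : Type
  [act : MulAction K carrier]
  [fin : Finite carrier]
  str : carrier → Z
  equivar : ∀ (k : K) (a : carrier), str (k • a) = k • str a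

attribute [instance] FinGSetOver.act FinGSetOver.fin

instance FinGSetOverCategory (K : Type) [Group K] (Z : Type) [MulAction K Z] :
    Category (FinGSetOver K Z) where
  Hom F F' := {φ : F.carrier → F'.carrier //
    (∀ (k : K) (a : F.carrier), φ (k • a) = k • φ a) ∧ ∀ a, F'.str (φ a) = F.str a}
  id F := ⟨fun a => a, ⟨fun _ _ => rfl, fun _ => rfl⟩⟩
  comp φ ψ := ⟨fun a => ψ.1 (φ.1 a),
    ⟨fun k a => by simp only [φ.2.1, ψ.2.1], fun a => by simp only [ψ.2.2, φ.2.2]⟩⟩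
  id_comp := by intros; rfl
  comp_id := by intros; rfl
  assoc := by intros; rfl

namespace IndProof8

variable {G H : Type} [Group G] [Group H] {X Y : Type} [MulAction G X] [MulAction H Y]

/-- The `H`-coordinate of an element of `Ind_{ι_G} X`. -/
def hco : Quot (indRel8 (MonoidHom.inl G H) X) → H :=
  Quot.lift (fun p => p.1.2) (by
    rintro p q ⟨g, h1, _⟩
    rw [h1]
    simp)

/-- The `X`-coordinate of an element of `Ind_{ι_G} X`. -/
def xco : Quot (indRel8 (MonoidHom.inl G H) X) → X :=
  Quot.lift (fun p => p.1.1 • p.2) (by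
    rintro p q ⟨g, h1, h2⟩
    rw [h1, h2]
    simp [mul_smul])

@[simp] lemma hco_mk (p : (G × H) × X) :
    hco (Quot.mk (indRel8 (MonoidHom.inl G H) X) p) = p.1.2 := rfl

@[simp] lemma xco_mk (p : (G × H) × X) :
    xco (Quot.mk (indRel8 (MonoidHom.inl G H) X) p) = p.1.1 • p.2 := rfl

@[simp] lemma hco_smul (k : G × H) (q : Quot (indRel8 (MonoidHom.inl G H) X)) :
    hco (k • q) = k.2 * hco q := by
  obtain ⟨p, rfl⟩ := Quot.exists_rep q
  rfl

@[simp] lemma xco_smul (k : G × H) (q : Quot (indRel8 (MonoidHom.inl G H) X)) :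
    xco (k • q) = k.1 • xco q := by
  obtain ⟨p, rfl⟩ := Quot.exists_rep q
  show (k.1 * p.1.1) • p.2 = k.1 • (p.1.1 • p.2)
  rw [mul_smul]

lemma mk_hco_xco (q : Quot (indRel8 (MonoidHom.inl G H) X)) :
    Quot.mk (indRel8 (MonoidHom.inl G H) X) (((1 : G), hco q), xco q) = q := by
  obtain ⟨p, rfl⟩ := Quot.exists_rep q
  refine Quot.sound ⟨p.1.1⁻¹, ?_, ?_⟩
  · ext <;> simp
  · simp

lemma eqX {q q' : Quot (indRel8 (MonoidHom.inl G H) X)}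
    (h1 : hco q = hco q') (h2 : xco q = xco q') : q = q' := by
  rw [← mk_hco_xco q, ← mk_hco_xco q', h1, h2]

/-- The `G`-coordinate of an element of `Ind_{ι_H} Y`. -/
def gco : Quot (indRel8 (MonoidHom.inr G H) Y) → G :=
  Quot.lift (fun p => p.1.1) (by
    rintro p q ⟨g, h1, _⟩
    rw [h1]
    simp)

/-- The `Y`-coordinate of an element of `Ind_{ι_H} Y`. -/
def yco : Quot (indRel8 (MonoidHom.inr G H) Y) → Y :=
  Quot.lift (fun p => p.1.2 • p.2) (by
    rintro p q ⟨g, h1, h2⟩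
    rw [h1, h2]
    simp [mul_smul])

@[simp] lemma gco_mk (p : (G × H) × Y) :
    gco (Quot.mk (indRel8 (MonoidHom.inr G H) Y) p) = p.1.1 := rfl

@[simp] lemma yco_mk (p : (G × H) × Y) :
    yco (Quot.mk (indRel8 (MonoidHom.inr G H) Y) p) = p.1.2 • p.2 := rfl

@[simp] lemma gco_smul (k : G × H) (q : Quot (indRel8 (MonoidHom.inr G H) Y)) :
    gco (k • q) = k.1 * gco q := by
  obtain ⟨p, rfl⟩ := Quot.exists_rep q
  rfl

@[simp] lemma yco_smul (k : G × H) (q : Quot (indRel8 (MonoidHom.inr G H) Y)) :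
    yco (k • q) = k.2 • yco q := by
  obtain ⟨p, rfl⟩ := Quot.exists_rep q
  show (k.2 * p.1.2) • p.2 = k.2 • (p.1.2 • p.2)
  rw [mul_smul]

lemma mk_gco_yco (q : Quot (indRel8 (MonoidHom.inr G H) Y)) :
    Quot.mk (indRel8 (MonoidHom.inr G H) Y) ((gco q, (1 : H)), yco q) = q := by
  obtain ⟨p, rfl⟩ := Quot.exists_rep q
  refine Quot.sound ⟨p.1.2⁻¹, ?_, ?_⟩
  · ext <;> simp
  · simp

lemma eqY {q q' : Quot (indRel8 (MonoidHom.inr G H) Y)}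
    (h1 : gco q = gco q') (h2 : yco q = yco q') : q = q' := by
  rw [← mk_gco_yco q, ← mk_gco_yco q', h1, h2]

@[simp] lemma smul_inl {K A B : Type} [Monoid K] [MulAction K A] [MulAction K B]
    (k : K) (a : A) : (k • (Sum.inl a : A ⊕ B)) = Sum.inl (k • a) := rfl

@[simp] lemma smul_inr {K A B : Type} [Monoid K] [MulAction K A] [MulAction K B]
    (k : K) (b : B) : (k • (Sum.inr b : A ⊕ B)) = Sum.inr (k • b) := rfl

instance actL (B : Type) [MulAction G B] : MulAction (G × H) (B × H) where
  smul k p := (k.1 • p.1, k.2 * p.2)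
  one_smul := by
    rintro ⟨b, h⟩
    show ((1 : G) • b, (1 : H) * h) = (b, h)
    rw [one_smul, one_mul]
  mul_smul := by
    rintro ⟨a, b⟩ ⟨a', b'⟩ ⟨p, h⟩
    show ((a * a') • p, (b * b') * h) = (a • a' • p, b * (b' * h))
    rw [mul_smul, mul_assoc]

instance actR (C : Type) [MulAction H C] : MulAction (G × H) (G × C) where
  smul k p := (k.1 * p.1, k.2 • p.2)
  one_smul := by
    rintro ⟨g, c⟩
    show ((1 : G) * g, (1 : H) • c) = (g, c)
    rw [one_smul, one_mul]
  mul_smul := by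
    rintro ⟨a, b⟩ ⟨a', b'⟩ ⟨g, c⟩
    show ((a * a') * g, (b * b') • c) = (a * (a' * g), b • b' • c)
    rw [mul_smul, mul_assoc]

@[simp] lemma smul_pairL {B : Type} [MulAction G B] (k : G × H) (b : B) (h : H) :
    k • ((b, h) : B × H) = (k.1 • b, k.2 * h) := rfl

@[simp] lemma smul_pairR {C : Type} [MulAction H C] (k : G × H) (g : G) (c : C) :
    k • ((g, c) : G × C) = (k.1 * g, k.2 • c) := rfl

variable [Finite G] [Finite H] [Finite X] [Finite Y]

/-- The object part of the functor: `(B, C) ↦ (B × H) ⊔ (G × C)`. -/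
def psiObj (B : FinGSetOver G X) (C : FinGSetOver H Y) :
    FinGSetOver (G × H)
      (Quot (indRel8 (MonoidHom.inl G H) X) ⊕ Quot (indRel8 (MonoidHom.inr G H) Y)) where
  carrier := (B.carrier × H) ⊕ (G × C.carrier)
  str z := match z with
    | .inl p => .inl (Quot.mk _ (((1 : G), p.2), B.str p.1))
    | .inr p => .inr (Quot.mk _ ((p.1, (1 : H)), C.str p.2))
  equivar := by
    rintro ⟨a, b⟩ (⟨p, h⟩ | ⟨g, c⟩)
    · show Sum.inl (Quot.mk _ (((1 : G), b * h), B.str (a • p))) =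
        ((a, b) : G × H) • Sum.inl (Quot.mk _ (((1 : G), h), B.str p))
      rw [smul_inl]
      refine congrArg Sum.inl (eqX ?_ ?_)
      · simp
      · simp [B.equivar]
    · show Sum.inr (Quot.mk _ ((a * g, (1 : H)), C.str (b • c))) =
        ((a, b) : G × H) • Sum.inr (Quot.mk _ ((g, (1 : H)), C.str c))
      rw [smul_inr]
      refine congrArg Sum.inr (eqY ?_ ?_)
      · simp
      · simp [C.equivar]

/-- The functor `(G`-Set`/X) × (H`-Set`/Y) ⥤ (G × H)`-Set`/(Ind X ⊔ Ind Y)`. -/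
def psi : FinGSetOver G X × FinGSetOver H Y ⥤
    FinGSetOver (G × H)
      (Quot (indRel8 (MonoidHom.inl G H) X) ⊕ Quot (indRel8 (MonoidHom.inr G H) Y)) where
  obj P := psiObj P.1 P.2
  map {P P'} φ := ⟨fun z => match z with
      | .inl p => .inl (φ.1.1 p.1, p.2)
      | .inr p => .inr (p.1, φ.2.1 p.2), by
    constructor
    · rintro ⟨a, b⟩ (⟨p, h⟩ | ⟨g, c⟩)
      · show Sum.inl (φ.1.1 (a • p), b * h) = ((a, b) : G × H) • Sum.inl (φ.1.1 p, h)
        rw [φ.1.2.1]; rfl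
      · show Sum.inr (a * g, φ.2.1 (b • c)) = ((a, b) : G × H) • Sum.inr (g, φ.2.1 c)
        rw [φ.2.2.1]; rfl
    · rintro (⟨p, h⟩ | ⟨g, c⟩)
      · show Sum.inl (Quot.mk _ (((1 : G), h), P'.1.str (φ.1.1 p))) = _
        rw [φ.1.2.2]
        rfl
      · show Sum.inr (Quot.mk _ ((g, (1 : H)), P'.2.str (φ.2.1 c))) = _
        rw [φ.2.2.2]
        rfl⟩
  map_id := by
    intro P
    apply Subtype.ext
    funext z
    rcases z with p | p <;> rfl
  map_comp := by
    intro P P' P'' φ ψ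
    apply Subtype.ext
    funext z
    rcases z with p | p <;> rfl

instance psi_faithful : (psi (G := G) (H := H) (X := X) (Y := Y)).Faithful where
  map_injective := by
    intro P P' φ ψ h
    have h' := congrArg Subtype.val h
    refine Prod.ext (Subtype.ext (funext fun b => ?_)) (Subtype.ext (funext fun c => ?_))
    · have := congrFun h' (Sum.inl (b, 1))
      exact congrArg Prod.fst (Sum.inl_injective this)
    · have := congrFun h' (Sum.inr (1, c))
      exact congrArg Prod.snd (Sum.inr_injective this)

lemma exists_left {P P' : FinGSetOver G X × FinGSetOver H Y}
    (τ : psi.obj P ⟶ psi.obj P') (b : P.1.carrier) :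
    ∃ b', τ.1 (Sum.inl (b, 1)) = Sum.inl (b', (1 : H)) ∧ P'.1.str b' = P.1.str b := by
  have hstr := τ.2.2 (Sum.inl (b, 1))
  rcases hτ : τ.1 (Sum.inl (b, 1)) with ⟨b', h⟩ | p
  · rw [hτ] at hstr
    have hq : Quot.mk (indRel8 (MonoidHom.inl G H) X) (((1 : G), h), P'.1.str b') =
        Quot.mk _ (((1 : G), (1 : H)), P.1.str b) := by
      exact Sum.inl_injective hstr
    have h1 : h = 1 := by simpa using congrArg hco hq
    have h2 : P'.1.str b' = P.1.str b := by simpa using congrArg xco hq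
    exact ⟨b', by rw [h1], h2⟩
  · rw [hτ] at hstr
    exact (Sum.inr_ne_inl hstr).elim

lemma exists_right {P P' : FinGSetOver G X × FinGSetOver H Y}
    (τ : psi.obj P ⟶ psi.obj P') (c : P.2.carrier) :
    ∃ c', τ.1 (Sum.inr (1, c)) = Sum.inr ((1 : G), c') ∧ P'.2.str c' = P.2.str c := by
  have hstr := τ.2.2 (Sum.inr (1, c))
  rcases hτ : τ.1 (Sum.inr (1, c)) with p | ⟨g, c'⟩
  · rw [hτ] at hstr
    exact (Sum.inl_ne_inr hstr).elim
  · rw [hτ] at hstr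
    have hq : Quot.mk (indRel8 (MonoidHom.inr G H) Y) ((g, (1 : H)), P'.2.str c') =
        Quot.mk _ (((1 : G), (1 : H)), P.2.str c) := by
      exact Sum.inr_injective hstr
    have h1 : g = 1 := by simpa using congrArg gco hq
    have h2 : P'.2.str c' = P.2.str c := by simpa using congrArg yco hq
    exact ⟨c', by rw [h1], h2⟩

instance psi_full : (psi (G := G) (H := H) (X := X) (Y := Y)).Full where
  map_surjective := by
    intro P P' τ
    choose φf hφ hφstr using exists_left τ
    choose ψf hψ hψstr using exists_right τ
    have keyL : ∀ (b : P.1.carrier) (h : H), τ.1 (Sum.inl (b, h)) = Sum.inl (φf b, h) := by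
      intro b h
      have e1 : (((1 : G), h) : G × H) • (Sum.inl (b, (1 : H)) : (psi.obj P).carrier) =
          Sum.inl (b, h) := by
        rw [smul_inl, smul_pairL, one_smul, mul_one]
      refine (congrArg τ.1 e1.symm).trans ((τ.2.1 _ _).trans ?_)
      rw [hφ]
      show (Sum.inl ((1 : G) • φf b, h * 1) : (psi.obj P').carrier) = _
      rw [one_smul, mul_one]
    have keyR : ∀ (c : P.2.carrier) (g : G), τ.1 (Sum.inr (g, c)) = Sum.inr (g, ψf c) := by
      intro c g
      have e1 : ((g, (1 : H)) : G × H) • (Sum.inr ((1 : G), c) : (psi.obj P).carrier) =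
          Sum.inr (g, c) := by
        rw [smul_inr, smul_pairR, one_smul, mul_one]
      refine (congrArg τ.1 e1.symm).trans ((τ.2.1 _ _).trans ?_)
      rw [hψ]
      show (Sum.inr (g * 1, (1 : H) • ψf c) : (psi.obj P').carrier) = _
      rw [one_smul, mul_one]
    refine ⟨⟨⟨φf, ?_, hφstr⟩, ⟨ψf, ?_, hψstr⟩⟩, ?_⟩
    · -- equivariance of φf
      intro g b
      have := keyL (g • b) 1
      have e2 : τ.1 (Sum.inl (g • b, 1)) = Sum.inl (g • φf b, 1) := by
        have e1 : ((g, (1 : H)) : G × H) • (Sum.inl (b, (1 : H)) : (psi.obj P).carrier) =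
            Sum.inl (g • b, 1) := by
          rw [smul_inl, smul_pairL, mul_one]
        rw [← e1]
        refine (τ.2.1 _ _).trans ?_
        rw [hφ]
        show (Sum.inl (g • φf b, (1 : H) * 1) : (psi.obj P').carrier) = _
        rw [mul_one]
      rw [e2] at this
      exact (Prod.ext_iff.1 (Sum.inl_injective this.symm)).1
    · -- equivariance of ψf
      intro h c
      have := keyR (h • c) 1
      have e2 : τ.1 (Sum.inr (1, h • c)) = Sum.inr (1, h • ψf c) := by
        have e1 : (((1 : G), h) : G × H) • (Sum.inr ((1 : G), c) : (psi.obj P).carrier) =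
            Sum.inr (1, h • c) := by
          rw [smul_inr, smul_pairR, mul_one]
        rw [← e1]
        refine (τ.2.1 _ _).trans ?_
        rw [hψ]
        show (Sum.inr ((1 : G) * 1, h • ψf c) : (psi.obj P').carrier) = _
        rw [mul_one]
      rw [e2] at this
      exact (Prod.ext_iff.1 (Sum.inr_injective this.symm)).2
    · apply Subtype.ext
      funext z
      rcases z with ⟨b, h⟩ | ⟨g, c⟩
      · exact (keyL b h).symm
      · exact (keyR c g).symm

variable (A : FinGSetOver (G × H)
    (Quot (indRel8 (MonoidHom.inl G H) X) ⊕ Quot (indRel8 (MonoidHom.inr G H) Y)))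

/-- The `G`-set over `X` extracted from a `(G × H)`-set over `Ind X ⊔ Ind Y`. -/
def bg : FinGSetOver G X where
  carrier := {p : A.carrier × X //
    A.str p.1 = Sum.inl (Quot.mk _ (((1 : G), (1 : H)), p.2))}
  act :=
    { smul := fun g p => ⟨(((g, (1 : H)) : G × H) • p.1.1, g • p.1.2), by
        rw [A.equivar, p.2, smul_inl]
        refine congrArg Sum.inl (eqX ?_ ?_)
        · simp
        · simp⟩
      one_smul := by
        rintro ⟨⟨a, x⟩, hp⟩
        apply Subtype.ext
        show ((((1 : G), (1 : H)) : G × H) • a, (1 : G) • x) = (a, x)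
        rw [one_smul, show (((1 : G), (1 : H)) : G × H) = 1 from rfl, one_smul]
      mul_smul := by
        rintro g g' ⟨⟨a, x⟩, hp⟩
        apply Subtype.ext
        show (((g * g', (1 : H)) : G × H) • a, (g * g') • x) =
          (((g, (1 : H)) : G × H) • ((g', (1 : H)) : G × H) • a, g • g' • x)
        refine Prod.ext ?_ ?_
        · rw [smul_smul, Prod.mk_mul_mk, mul_one]
        · rw [mul_smul] }
  str p := p.1.2
  equivar := fun _ _ => rfl

/-- The `H`-set over `Y` extracted from a `(G × H)`-set over `Ind X ⊔ Ind Y`. -/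
def bh : FinGSetOver H Y where
  carrier := {p : A.carrier × Y //
    A.str p.1 = Sum.inr (Quot.mk _ (((1 : G), (1 : H)), p.2))}
  act :=
    { smul := fun h p => ⟨((((1 : G), h) : G × H) • p.1.1, h • p.1.2), by
        rw [A.equivar, p.2, smul_inr]
        refine congrArg Sum.inr (eqY ?_ ?_)
        · simp
        · simp⟩
      one_smul := by
        rintro ⟨⟨a, y⟩, hp⟩
        apply Subtype.ext
        show ((((1 : G), (1 : H)) : G × H) • a, (1 : H) • y) = (a, y)
        rw [one_smul, show (((1 : G), (1 : H)) : G × H) = 1 from rfl, one_smul]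
      mul_smul := by
        rintro h h' ⟨⟨a, y⟩, hp⟩
        apply Subtype.ext
        show ((((1 : G), h * h') : G × H) • a, (h * h') • y) =
          ((((1 : G), h) : G × H) • (((1 : G), h') : G × H) • a, h • h' • y)
        refine Prod.ext ?_ ?_
        · rw [smul_smul, Prod.mk_mul_mk, mul_one]
        · rw [mul_smul] }
  str p := p.1.2
  equivar := fun _ _ => rfl

/-- The comparison morphism `psiObj (bg A) (bh A) ⟶ A`. -/
def uMor : psiObj (bg A) (bh A) ⟶ A := by
  refine ⟨fun z => match z with
    | .inl (p, h) => (((1 : G), h) : G × H) • p.1.1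
    | .inr (g, q) => ((g, (1 : H)) : G × H) • q.1.1, ?_, ?_⟩
  · rintro ⟨a, b⟩ (⟨p, h⟩ | ⟨g, q⟩)
    · show (((1 : G), b * h) : G × H) • (((a, (1 : H)) : G × H) • p.1.1) =
        ((a, b) : G × H) • (((1 : G), h) : G × H) • p.1.1
      simp only [smul_smul, Prod.mk_mul_mk, one_mul, mul_one]
    · show ((a * g, (1 : H)) : G × H) • ((((1 : G), b) : G × H) • q.1.1) =
        ((a, b) : G × H) • ((g, (1 : H)) : G × H) • q.1.1
      simp only [smul_smul, Prod.mk_mul_mk, one_mul, mul_one]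
  · rintro (⟨p, h⟩ | ⟨g, q⟩)
    · show A.str ((((1 : G), h) : G × H) • p.1.1) = _
      rw [A.equivar, p.2, smul_inl]
      refine congrArg Sum.inl (eqX ?_ ?_)
      · simp
      · simp
        rfl
    · show A.str (((g, (1 : H)) : G × H) • q.1.1) = _
      rw [A.equivar, q.2, smul_inr]
      refine congrArg Sum.inr (eqY ?_ ?_)
      · simp
      · simp
        rfl

lemma uMor_bijective : Function.Bijective (uMor A).1 := by
  constructor
  · rintro (⟨p, h⟩ | ⟨g, q⟩) (⟨p', h'⟩ | ⟨g', q'⟩) e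
    · have e' : (((1 : G), h) : G × H) • p.1.1 = (((1 : G), h') : G × H) • p'.1.1 := e
      have hstr := congrArg A.str e'
      rw [A.equivar, A.equivar, p.2, p'.2, smul_inl, smul_inl] at hstr
      have hq := Sum.inl_injective hstr
      have hh : h = h' := by simpa using congrArg hco hq
      subst hh
      have ha : p.1.1 = p'.1.1 := smul_left_cancel _ e'
      have hx : p.1.2 = p'.1.2 := by simpa using congrArg xco hq
      have : p = p' := Subtype.ext (Prod.ext ha hx)
      rw [this]
    · have e' : (((1 : G), h) : G × H) • p.1.1 = ((g', (1 : H)) : G × H) • q'.1.1 := e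
      have hstr := congrArg A.str e'
      rw [A.equivar, A.equivar, p.2, q'.2, smul_inl, smul_inr] at hstr
      exact (Sum.inl_ne_inr hstr).elim
    · have e' : ((g, (1 : H)) : G × H) • q.1.1 = (((1 : G), h') : G × H) • p'.1.1 := e
      have hstr := congrArg A.str e'
      rw [A.equivar, A.equivar, q.2, p'.2, smul_inr, smul_inl] at hstr
      exact (Sum.inr_ne_inl hstr).elim
    · have e' : ((g, (1 : H)) : G × H) • q.1.1 = ((g', (1 : H)) : G × H) • q'.1.1 := e
      have hstr := congrArg A.str e'
      rw [A.equivar, A.equivar, q.2, q'.2, smul_inr, smul_inr] at hstr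
      have hq := Sum.inr_injective hstr
      have hg : g = g' := by simpa using congrArg gco hq
      subst hg
      have ha : q.1.1 = q'.1.1 := smul_left_cancel _ e'
      have hy : q.1.2 = q'.1.2 := by simpa using congrArg yco hq
      have : q = q' := Subtype.ext (Prod.ext ha hy)
      rw [this]
  · intro a
    rcases hz : A.str a with q | q
    · refine ⟨Sum.inl (⟨((((1 : G), (hco q)⁻¹) : G × H) • a, xco q), ?_⟩, hco q), ?_⟩
      · rw [A.equivar, hz, smul_inl]
        refine congrArg Sum.inl (eqX ?_ ?_)
        · simp
        · simp
      · show (((1 : G), hco q) : G × H) • (((1 : G), (hco q)⁻¹) : G × H) • a = a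
        simp only [smul_smul, Prod.mk_mul_mk, one_mul, mul_inv_cancel, Prod.mk_one_one,
          one_smul]
    · refine ⟨Sum.inr (gco q, ⟨((((gco q)⁻¹, (1 : H)) : G × H) • a, yco q), ?_⟩), ?_⟩
      · rw [A.equivar, hz, smul_inr]
        refine congrArg Sum.inr (eqY ?_ ?_)
        · simp
        · simp
      · show ((gco q, (1 : H)) : G × H) • (((gco q)⁻¹, (1 : H)) : G × H) • a = a
        simp only [smul_smul, Prod.mk_mul_mk, one_mul, mul_inv_cancel, Prod.mk_one_one,
          one_smul]

/-- A morphism of finite `K`-sets over `Z` whose underlying map is bijective is an iso. -/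
noncomputable def isoOfBijective {K : Type} [Group K] {Z : Type} [MulAction K Z]
    {F F' : FinGSetOver K Z} (φ : F ⟶ F') (hb : Function.Bijective φ.1) : F ≅ F' := by
  let e := Equiv.ofBijective φ.1 hb
  refine ⟨φ, ⟨e.symm, ?_, ?_⟩, ?_, ?_⟩
  · intro k a
    apply e.injective
    rw [e.apply_symm_apply]
    show k • a = φ.1 _
    rw [φ.2.1]
    show k • a = k • e (e.symm a)
    rw [e.apply_symm_apply]
  · intro a
    conv_rhs => rw [← e.apply_symm_apply a]
    exact (φ.2.2 (e.symm a)).symm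
  · apply Subtype.ext
    funext a
    exact e.symm_apply_apply a
  · apply Subtype.ext
    funext a
    exact e.apply_symm_apply a

instance psi_essSurj : (psi (G := G) (H := H) (X := X) (Y := Y)).EssSurj where
  mem_essImage A := ⟨(bg A, bh A), ⟨isoOfBijective (uMor A) (uMor_bijective A)⟩⟩

instance psi_isEquiv : (psi (G := G) (H := H) (X := X) (Y := Y)).IsEquivalence where

end IndProof8

/-- Let `G, H` be finite groups with the canonical inclusions
`ι_G : G → G × H`, `ι_H : H → G × H`, let `X` be a finite `G`-set and `Y` a
finite `H`-set.  The category of finite `(G × H)`-sets over the `(G × H)`-set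
`Ind_{ι_G} X ⊔ Ind_{ι_H} Y` is equivalent to `(G-Set/X) × (H-Set/Y)`. -/
theorem over_bicoproduct_equivalence
    (G H : Type) [Group G] [Group H] [Finite G] [Finite H]
    (X : Type) [Finite X] [MulAction G X] (Y : Type) [Finite Y] [MulAction H Y] :
    Nonempty
      (FinGSetOver (G × H)
          (Quot (indRel8 (MonoidHom.inl G H) X) ⊕ Quot (indRel8 (MonoidHom.inr G H) Y)) ≌
        FinGSetOver G X × FinGSetOver H Y) := by
  exact ⟨(IndProof8.psi).asEquivalence.symm⟩
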